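/- The function h₂(x) = (sin(x) - x·cos(x)) / (x·(1 - cos(x))) is strictly decreasing on (0, 2π). -/

import Mathlib

open Real

private lemma nonneg_of_deriv (f f' : ℝ → ℝ) (hf : ∀ x, HasDerivAt f (f' x) x)
    (h0 : f 0 = 0) (hd : ∀ x, 0 ≤ x → 0 ≤ f' x) {x : ℝ} (hx : 0 ≤ x) : 0 ≤ f x := by
  have hmono : MonotoneOn f (Set.Ici (0 : ℝ)) := by
    apply monotoneOn_of_deriv_nonneg (convex_Ici 0)
    · exact fun y _ => (hf y).continuousAt.continuousWithinAt
    · exact fun y _ => (hf y).differentiableAt.differentiableWithinAt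
    · intro y hy
      rw [interior_Ici] at hy
      rw [(hf y).deriv]
      exact hd y hy.le
  have := hmono Set.self_mem_Ici hx hx
  rwa [h0] at this

private lemma sin_ge_t3 {x : ℝ} (hx : 0 ≤ x) : x - x ^ 3 / 6 ≤ sin x := by
  have h := nonneg_of_deriv (fun y => Real.sin y - (y - y ^ 3 / 6))
    (fun y => Real.cos y - (1 - y ^ 2 / 2)) (fun y => by
      have h1 : HasDerivAt (fun y : ℝ => y - y ^ 3 / 6) (1 - y ^ 2 / 2) y := by
        have := (hasDerivAt_id y).sub ((hasDerivAt_pow 3 y).div_const 6)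
        refine this.congr_deriv ?_
        norm_num
        ring
      exact (Real.hasDerivAt_sin y).sub h1)
    (by simp) (fun y _ => by linarith [Real.one_sub_sq_div_two_le_cos (x := y)]) hx
  linarith [h]

private lemma cos_le_t4 {x : ℝ} (hx : 0 ≤ x) : cos x ≤ 1 - x ^ 2 / 2 + x ^ 4 / 24 := by
  have h := nonneg_of_deriv (fun y => (1 - y ^ 2 / 2 + y ^ 4 / 24) - Real.cos y)
    (fun y => Real.sin y - (y - y ^ 3 / 6)) (fun y => by
      have h1 : HasDerivAt (fun y : ℝ => 1 - y ^ 2 / 2 + y ^ 4 / 24)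
          (-(y - y ^ 3 / 6) + 0) y := by
        have := (((hasDerivAt_pow 2 y).div_const 2).const_sub 1).add
          ((hasDerivAt_pow 4 y).div_const 24)
        refine this.congr_deriv ?_
        norm_num
        ring
      have := h1.sub (Real.hasDerivAt_cos y)
      refine this.congr_deriv ?_
      ring)
    (by simp) (fun y hy => by linarith [sin_ge_t3 hy]) hx
  linarith [h]

private lemma sin_le_t5 {x : ℝ} (hx : 0 ≤ x) :
    sin x ≤ x - x ^ 3 / 6 + x ^ 5 / 120 := by
  have h := nonneg_of_deriv (fun y => (y - y ^ 3 / 6 + y ^ 5 / 120) - Real.sin y)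
    (fun y => (1 - y ^ 2 / 2 + y ^ 4 / 24) - Real.cos y) (fun y => by
      have h1 : HasDerivAt (fun y : ℝ => y - y ^ 3 / 6 + y ^ 5 / 120)
          (1 - y ^ 2 / 2 + y ^ 4 / 24) y := by
        have := ((hasDerivAt_id y).sub ((hasDerivAt_pow 3 y).div_const 6)).add
          ((hasDerivAt_pow 5 y).div_const 120)
        refine this.congr_deriv ?_
        norm_num
        ring
      exact h1.sub (Real.hasDerivAt_sin y))
    (by simp) (fun y hy => by linarith [cos_le_t4 hy]) hx
  linarith [h]

private lemma cos_ge_t6 {x : ℝ} (hx : 0 ≤ x) :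
    1 - x ^ 2 / 2 + x ^ 4 / 24 - x ^ 6 / 720 ≤ cos x := by
  have h := nonneg_of_deriv
    (fun y => Real.cos y - (1 - y ^ 2 / 2 + y ^ 4 / 24 - y ^ 6 / 720))
    (fun y => (y - y ^ 3 / 6 + y ^ 5 / 120) - Real.sin y) (fun y => by
      have h1 : HasDerivAt (fun y : ℝ => 1 - y ^ 2 / 2 + y ^ 4 / 24 - y ^ 6 / 720)
          (-(y - y ^ 3 / 6 + y ^ 5 / 120)) y := by
        have := ((((hasDerivAt_pow 2 y).div_const 2).const_sub 1).add
          ((hasDerivAt_pow 4 y).div_const 24)).sub ((hasDerivAt_pow 6 y).div_const 720)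
        refine this.congr_deriv ?_
        norm_num
        ring
      have := (Real.hasDerivAt_cos y).sub h1
      refine this.congr_deriv ?_
      ring)
    (by simp) (fun y hy => by linarith [sin_le_t5 hy]) hx
  linarith [h]

private lemma sin_ge_t7 {x : ℝ} (hx : 0 ≤ x) :
    x - x ^ 3 / 6 + x ^ 5 / 120 - x ^ 7 / 5040 ≤ sin x := by
  have h := nonneg_of_deriv
    (fun y => Real.sin y - (y - y ^ 3 / 6 + y ^ 5 / 120 - y ^ 7 / 5040))
    (fun y => Real.cos y - (1 - y ^ 2 / 2 + y ^ 4 / 24 - y ^ 6 / 720)) (fun y => by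
      have h1 : HasDerivAt (fun y : ℝ => y - y ^ 3 / 6 + y ^ 5 / 120 - y ^ 7 / 5040)
          (1 - y ^ 2 / 2 + y ^ 4 / 24 - y ^ 6 / 720) y := by
        have := (((hasDerivAt_id y).sub ((hasDerivAt_pow 3 y).div_const 6)).add
          ((hasDerivAt_pow 5 y).div_const 120)).sub ((hasDerivAt_pow 7 y).div_const 5040)
        refine this.congr_deriv ?_
        norm_num
        ring
      exact (Real.hasDerivAt_sin y).sub h1)
    (by simp) (fun y hy => by linarith [cos_ge_t6 hy]) hx
  linarith [h]

private lemma cos_le_t8 {x : ℝ} (hx : 0 ≤ x) :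
    cos x ≤ 1 - x ^ 2 / 2 + x ^ 4 / 24 - x ^ 6 / 720 + x ^ 8 / 40320 := by
  have h := nonneg_of_deriv
    (fun y => (1 - y ^ 2 / 2 + y ^ 4 / 24 - y ^ 6 / 720 + y ^ 8 / 40320) - Real.cos y)
    (fun y => Real.sin y - (y - y ^ 3 / 6 + y ^ 5 / 120 - y ^ 7 / 5040)) (fun y => by
      have h1 : HasDerivAt
          (fun y : ℝ => 1 - y ^ 2 / 2 + y ^ 4 / 24 - y ^ 6 / 720 + y ^ 8 / 40320)
          (-(y - y ^ 3 / 6 + y ^ 5 / 120 - y ^ 7 / 5040)) y := by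
        have := (((((hasDerivAt_pow 2 y).div_const 2).const_sub 1).add
          ((hasDerivAt_pow 4 y).div_const 24)).sub ((hasDerivAt_pow 6 y).div_const 720)).add
          ((hasDerivAt_pow 8 y).div_const 40320)
        refine this.congr_deriv ?_
        norm_num
        ring
      have := h1.sub (Real.hasDerivAt_cos y)
      refine this.congr_deriv ?_
      ring)
    (by simp) (fun y hy => by linarith [sin_ge_t7 hy]) hx
  linarith [h]

private lemma sin_le_t9 {x : ℝ} (hx : 0 ≤ x) :
    sin x ≤ x - x ^ 3 / 6 + x ^ 5 / 120 - x ^ 7 / 5040 + x ^ 9 / 362880 := by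
  have h := nonneg_of_deriv
    (fun y => (y - y ^ 3 / 6 + y ^ 5 / 120 - y ^ 7 / 5040 + y ^ 9 / 362880) - Real.sin y)
    (fun y => (1 - y ^ 2 / 2 + y ^ 4 / 24 - y ^ 6 / 720 + y ^ 8 / 40320) - Real.cos y)
    (fun y => by
      have h1 : HasDerivAt
          (fun y : ℝ => y - y ^ 3 / 6 + y ^ 5 / 120 - y ^ 7 / 5040 + y ^ 9 / 362880)
          (1 - y ^ 2 / 2 + y ^ 4 / 24 - y ^ 6 / 720 + y ^ 8 / 40320) y := by
        have := ((((hasDerivAt_id y).sub ((hasDerivAt_pow 3 y).div_const 6)).add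
          ((hasDerivAt_pow 5 y).div_const 120)).sub
          ((hasDerivAt_pow 7 y).div_const 5040)).add
          ((hasDerivAt_pow 9 y).div_const 362880)
        refine this.congr_deriv ?_
        norm_num
        ring
      exact h1.sub (Real.hasDerivAt_sin y))
    (by simp) (fun y hy => by linarith [cos_le_t8 hy]) hx
  linarith [h]

/-- The key inequality: the numerator of the derivative is negative. -/
private lemma key_ineq {x : ℝ} (hx : x ∈ Set.Ioo 0 (2 * π)) :
    sin x * (x ^ 2 - 1 + cos x) < x * (1 - cos x) := by
  obtain ⟨hx0, hx2⟩ := hx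
  have hcos1 : cos x < 1 := by
    refine lt_of_le_of_ne (Real.cos_le_one x) fun h => ?_
    have := (Real.cos_eq_one_iff_of_lt_of_lt (by linarith) hx2).1 h
    linarith
  have hA : 0 < x ^ 2 - 1 + cos x := by
    have := Real.one_sub_sq_div_two_le_cos (x := x)
    nlinarith
  rcases le_or_gt π x with hpi | hlt
  · -- here sin x ≤ 0
    have hs : sin x ≤ 0 := by
      have h1 : 0 ≤ sin (x - π) := Real.sin_nonneg_of_nonneg_of_le_pi (by linarith)
        (by linarith)
      rw [Real.sin_sub_pi] at h1
      linarith
    have h2 : sin x * (x ^ 2 - 1 + cos x) ≤ 0 := mul_nonpos_of_nonpos_of_nonneg hs hA.le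
    have h3 : 0 < x * (1 - cos x) := mul_pos hx0 (by linarith)
    linarith
  · -- 0 < x < π, use Taylor bounds
    have hs : 0 < sin x := Real.sin_pos_of_pos_of_lt_pi hx0 hlt
    have hx315 : x < 3.15 := lt_trans hlt Real.pi_lt_d2
    set sU := x - x ^ 3 / 6 + x ^ 5 / 120 - x ^ 7 / 5040 + x ^ 9 / 362880 with hsUdef
    set cU := 1 - x ^ 2 / 2 + x ^ 4 / 24 - x ^ 6 / 720 + x ^ 8 / 40320 with hcUdef
    have hsU : sin x ≤ sU := sin_le_t9 hx0.le
    have hcU : cos x ≤ cU := cos_le_t8 hx0.le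
    have hsU0 : 0 < sU := lt_of_lt_of_le hs hsU
    have step1 : sin x * (x ^ 2 - 1 + cos x) ≤ sU * (x ^ 2 - 1 + cos x) :=
      mul_le_mul_of_nonneg_right hsU hA.le
    have step2 : sU * (x ^ 2 - 1 + cos x) ≤ sU * (x ^ 2 - 1 + cU) :=
      mul_le_mul_of_nonneg_left (by linarith) hsU0.le
    have step4 : x * (1 - cU) ≤ x * (1 - cos x) :=
      mul_le_mul_of_nonneg_left (by linarith) hx0.le
    -- the polynomial inequality
    have hu : x ^ 2 < 10 := by nlinarith
    have hu0 : (0 : ℝ) < x ^ 2 := by positivity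
    have h1 : (0 : ℝ) < 81285120 - 7741440 * x ^ 2 := by nlinarith
    have h2 : (0 : ℝ) ≤ (x ^ 2) ^ 2 * (330624 - 8736 * x ^ 2) :=
      mul_nonneg (by positivity) (by nlinarith)
    have h3 : (0 : ℝ) ≤ (x ^ 2) ^ 4 * (128 - x ^ 2) :=
      mul_nonneg (by positivity) (by nlinarith)
    have hfac : x * (1 - cU) - sU * (x ^ 2 - 1 + cU) =
        x ^ 7 / 14631321600 * ((81285120 - 7741440 * x ^ 2) +
          (x ^ 2) ^ 2 * (330624 - 8736 * x ^ 2) + (x ^ 2) ^ 4 * (128 - x ^ 2)) := by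
      rw [hsUdef, hcUdef]; ring
    have hx7 : (0 : ℝ) < x ^ 7 / 14631321600 := by positivity
    have step3 : 0 < x * (1 - cU) - sU * (x ^ 2 - 1 + cU) := by
      rw [hfac]
      exact mul_pos hx7 (show (0:ℝ) < 81285120 - 7741440 * x ^ 2 +
        (x ^ 2) ^ 2 * (330624 - 8736 * x ^ 2) + (x ^ 2) ^ 4 * (128 - x ^ 2) by linarith)
    linarith

theorem h2_strictAntiOn :
    StrictAntiOn (fun x : ℝ => (Real.sin x - x * Real.cos x) / (x * (1 - Real.cos x)))
      (Set.Ioo 0 (2 * Real.pi)) := by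
  have hDpos : ∀ x ∈ Set.Ioo 0 (2 * π), 0 < x * (1 - cos x) := by
    intro x hx
    have hcos1 : cos x < 1 := by
      refine lt_of_le_of_ne (Real.cos_le_one x) fun h => ?_
      have := (Real.cos_eq_one_iff_of_lt_of_lt (by linarith [hx.1, hx.2]) hx.2).1 h
      linarith [hx.1]
    exact mul_pos hx.1 (by linarith)
  have hderiv : ∀ x ∈ Set.Ioo 0 (2 * π),
      HasDerivAt (fun x : ℝ => (Real.sin x - x * Real.cos x) / (x * (1 - Real.cos x)))
        ((x * sin x * (x * (1 - cos x)) -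
          (sin x - x * cos x) * (1 * (1 - cos x) + x * (0 - -sin x))) /
          (x * (1 - cos x)) ^ 2) x := by
    intro x hx
    have hN : HasDerivAt (fun x : ℝ => Real.sin x - x * Real.cos x) (x * sin x) x := by
      have := (Real.hasDerivAt_sin x).sub ((hasDerivAt_id x).mul (Real.hasDerivAt_cos x))
      refine this.congr_deriv ?_
      simp only [id_eq]
      ring
    have hD : HasDerivAt (fun x : ℝ => x * (1 - Real.cos x))
        (1 * (1 - cos x) + x * (0 - -sin x)) x :=
      (hasDerivAt_id x).mul ((hasDerivAt_const x 1).sub (Real.hasDerivAt_cos x))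
    exact hN.div hD (hDpos x hx).ne'
  apply strictAntiOn_of_deriv_neg (convex_Ioo 0 (2 * π))
  · apply ContinuousOn.div
    · exact (Real.continuous_sin.sub (continuous_id.mul Real.continuous_cos)).continuousOn
    · exact (continuous_id.mul (continuous_const.sub Real.continuous_cos)).continuousOn
    · exact fun x hx => (hDpos x hx).ne'
  · intro x hx
    rw [interior_Ioo] at hx
    rw [(hderiv x hx).deriv]
    apply div_neg_of_neg_of_pos
    · have hkey := key_ineq hx
      have hpyth := Real.sin_sq_add_cos_sq x
      have heq : x * sin x * (x * (1 - cos x)) -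
          (sin x - x * cos x) * (1 * (1 - cos x) + x * (0 - -sin x)) =
          sin x * (x ^ 2 - 1 + cos x) - x * (1 - cos x) := by
        linear_combination (-x) * hpyth
      linarith [hkey, heq]
    · exact pow_pos (hDpos x hx) 2
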